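/- Let (X₁,…,X_k) be real random variables with finite moments of all orders, let l ≥ k, and let (X₁ⁿ,…,X_kⁿ) for n = 1,…,l be independent copies of (X₁,…,X_k), independent of one another. For 1 ≤ i ≤ k set M_i = Diag(X_i¹,…,X_i^l), a random l×l diagonal matrix. Then E[M₁⊗⋯⊗M_k] = Σ_π (Π_{b∈π} cum_{|b|}((X_i)_{i∈b})) · Δ_π, the sum over all set partitions π of {1,…,k}; in particular, since (Δ_π)_π is linearly independent when l ≥ k, the coefficient of Δ_π in this (unique) decomposition of E[M₁⊗⋯⊗M_k] equals Π_{b∈π} cum_{|b|}((X_i)_{i∈b}), and for π the one-block partition it equals the classical cumulant cum_k(X₁,…,X_k). -/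

import Mathlib

open scoped Classical
open MeasureTheory ProbabilityTheory

/-- `P` is a partition of the finite set `s` into (nonempty, pairwise disjoint) blocks. -/
def IsPartitionOf {k : ℕ} (P : Finset (Finset (Fin k))) (s : Finset (Fin k)) : Prop :=
  (∀ b ∈ P, b.Nonempty) ∧ (∀ b ∈ P, b ⊆ s) ∧
    (∀ b ∈ P, ∀ b' ∈ P, b ≠ b' → Disjoint b b') ∧ (∀ i ∈ s, ∃ b ∈ P, i ∈ b)

lemma aux_integral_prod_indep {Ω : Type*} [MeasurableSpace Ω] {μ : Measure Ω}
    [IsProbabilityMeasure μ] {ι : Type*} (f : ι → Ω → ℝ)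
    (hindep : iIndepFun f μ)
    (hmeas : ∀ i, Measurable (f i))
    (hint : ∀ t : Finset ι, Integrable (fun ω => ∏ i ∈ t, f i ω) μ)
    (s : Finset ι) :
    ∫ ω, ∏ i ∈ s, f i ω ∂μ = ∏ i ∈ s, ∫ ω, f i ω ∂μ := by
  classical
  induction s using Finset.induction_on with
  | empty => simp
  | @insert a s ha ih =>
    have hIndep : IndepFun (f a) (∏ j ∈ s, f j) μ :=
      (hindep.indepFun_finset_prod_of_notMem hmeas ha).symm
    have h1 : Integrable (f a) μ := by simpa using hint {a}
    have hfn : (∏ j ∈ s, f j) = fun ω => ∏ j ∈ s, f j ω := Finset.prod_fn s f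
    have h2 : Integrable (∏ j ∈ s, f j) μ := by
      rw [hfn]; exact hint s
    have key : ∫ ω, f a ω * ∏ i ∈ s, f i ω ∂μ
        = (∫ ω, f a ω ∂μ) * ∫ ω, ∏ i ∈ s, f i ω ∂μ := by
      have h := hIndep.integral_mul_eq_mul_integral h1.aestronglyMeasurable h2.aestronglyMeasurable
      rw [hfn] at h
      simpa using h
    simp only [Finset.prod_insert ha]
    rw [key, ih]

lemma aux_isPartitionOf_empty_iff {k : ℕ} (P : Finset (Finset (Fin k))) :
    IsPartitionOf P (∅ : Finset (Fin k)) ↔ P = ∅ := by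
  constructor
  · rintro ⟨h1, h2, -, -⟩
    refine Finset.eq_empty_of_forall_notMem fun b hb => ?_
    obtain ⟨x, hx⟩ := h1 b hb
    exact absurd (h2 b hb hx) (by simp)
  · rintro rfl
    exact ⟨by simp, by simp, by simp, by simp⟩
lemma aux_partition_glue {k l : ℕ} (n : Fin k → Fin l) (cum : Finset (Fin k) → ℝ) :
    (∏ m : Fin l, ∑ P ∈ Finset.univ.filter
        (fun P : Finset (Finset (Fin k)) =>
          IsPartitionOf P (Finset.univ.filter (fun i => n i = m))), ∏ b ∈ P, cum b)
    = ∑ P ∈ Finset.univ.filter (fun P : Finset (Finset (Fin k)) =>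
          IsPartitionOf P Finset.univ ∧ ∀ b ∈ P, ∀ u ∈ b, ∀ v ∈ b, n u = n v),
        ∏ b ∈ P, cum b := by
  classical
  set F : Fin l → Finset (Fin k) := fun m => Finset.univ.filter (fun i => n i = m) with hF
  have hFmem : ∀ m i, i ∈ F m ↔ n i = m := by intro m i; simp [hF]
  have hFdisj : ∀ m m', m ≠ m' → Disjoint (F m) (F m') := by
    intro m m' hmm'
    rw [Finset.disjoint_left]
    intro i hi hi'
    exact hmm' (((hFmem m i).1 hi).symm.trans ((hFmem m' i).1 hi'))
  rw [Finset.prod_univ_sum]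
  refine Finset.sum_nbij' (fun g => Finset.univ.biUnion g)
    (fun P => fun m => P.filter (fun b => b ⊆ F m)) ?_ ?_ ?_ ?_ ?_
  · -- forward membership
    intro g hg
    rw [Fintype.mem_piFinset] at hg
    have hg' : ∀ m, IsPartitionOf (g m) (F m) := by
      intro m; have := hg m; simpa using this
    simp only [Finset.mem_filter, Finset.mem_univ, true_and]
    have hrefine : ∀ b ∈ Finset.univ.biUnion g, ∀ u ∈ b, ∀ v ∈ b, n u = n v := by
      intro b hb u hu v hv
      rw [Finset.mem_biUnion] at hb
      obtain ⟨m, -, hbm⟩ := hb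
      have hsub := (hg' m).2.1 b hbm
      exact ((hFmem m u).1 (hsub hu)).trans ((hFmem m v).1 (hsub hv)).symm
    refine ⟨⟨?_, fun b _ => b.subset_univ, ?_, ?_⟩, hrefine⟩
    · intro b hb
      rw [Finset.mem_biUnion] at hb
      obtain ⟨m, -, hbm⟩ := hb
      exact (hg' m).1 b hbm
    · intro b hb b' hb' hne
      rw [Finset.mem_biUnion] at hb hb'
      obtain ⟨m, -, hbm⟩ := hb
      obtain ⟨m', -, hbm'⟩ := hb'
      rcases eq_or_ne m m' with rfl | hmm'
      · exact (hg' m).2.2.1 b hbm b' hbm' hne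
      · exact (hFdisj m m' hmm').mono ((hg' m).2.1 b hbm) ((hg' m').2.1 b' hbm')
    · intro i _
      obtain ⟨b, hb, hib⟩ := (hg' (n i)).2.2.2 i ((hFmem (n i) i).2 rfl)
      exact ⟨b, Finset.mem_biUnion.2 ⟨n i, Finset.mem_univ _, hb⟩, hib⟩
  · -- backward membership
    intro P hP
    rw [Finset.mem_filter] at hP
    obtain ⟨-, ⟨hne, -, hdisj, hcov⟩, href⟩ := hP
    rw [Fintype.mem_piFinset]
    intro m
    simp only [Finset.mem_filter, Finset.mem_univ, true_and]
    refine ⟨fun b hb => hne b (Finset.mem_filter.1 hb).1,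
      fun b hb => (Finset.mem_filter.1 hb).2, ?_, ?_⟩
    · intro b hb b' hb' hbb'
      exact hdisj b (Finset.mem_filter.1 hb).1 b' (Finset.mem_filter.1 hb').1 hbb'
    · intro i hi
      obtain ⟨b, hb, hib⟩ := hcov i (Finset.mem_univ i)
      refine ⟨b, Finset.mem_filter.2 ⟨hb, fun u hu => ?_⟩, hib⟩
      exact (hFmem m u).2 ((href b hb u hu i hib).trans ((hFmem m i).1 hi))
  · -- left inverse
    intro g hg
    rw [Fintype.mem_piFinset] at hg
    have hg' : ∀ m, IsPartitionOf (g m) (F m) := by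
      intro m; have := hg m; simpa using this
    funext m
    ext b
    simp only [Finset.mem_filter, Finset.mem_biUnion, Finset.mem_univ, true_and]
    constructor
    · rintro ⟨⟨m', hbm'⟩, hsub⟩
      obtain ⟨x, hx⟩ := (hg' m').1 b hbm'
      have h1 : n x = m' := (hFmem m' x).1 ((hg' m').2.1 b hbm' hx)
      have h2 : n x = m := (hFmem m x).1 (hsub hx)
      rwa [h1.symm.trans h2] at hbm'
    · intro hb
      exact ⟨⟨m, hb⟩, (hg' m).2.1 b hb⟩
  · -- right inverse
    intro P hP
    rw [Finset.mem_filter] at hP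
    obtain ⟨-, ⟨hne, -, -, -⟩, href⟩ := hP
    ext b
    simp only [Finset.mem_biUnion, Finset.mem_univ, Finset.mem_filter, true_and]
    constructor
    · rintro ⟨m, hb, -⟩; exact hb
    · intro hb
      obtain ⟨x, hx⟩ := hne b hb
      refine ⟨n x, hb, fun u hu => (hFmem (n x) u).2 (href b hb u hu x hx)⟩
  · -- values
    intro g hg
    rw [Fintype.mem_piFinset] at hg
    have hg' : ∀ m, IsPartitionOf (g m) (F m) := by
      intro m; have := hg m; simpa using this
    rw [Finset.prod_biUnion]
    intro m _ m' _ hmm'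
    rw [Function.onFun, Finset.disjoint_left]
    intro b hb hb'
    obtain ⟨x, hx⟩ := (hg' m).1 b hb
    exact hmm' ((((hFmem m x).1 ((hg' m).2.1 b hb hx)).symm).trans
      ((hFmem m' x).1 ((hg' m').2.1 b hb' hx)))
/-- Let `(X₁,…,X_k)` be real random variables with all moments finite,
`l ≥ k`, and let `(X₁ⁿ,…,X_kⁿ)`, `n = 1,…,l`, be i.i.d. copies of `(X₁,…,X_k)`.
Set `M_i = Diag(X_i¹,…,X_i^l)`.  If `cum` satisfies the classical moment–cumulant
relation for the family `(X₁,…,X_k)`, then the diagonal entry of `E[M₁⊗⋯⊗M_k]` at a tuple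
`n : Fin k → Fin l` is `∑_{π refining Ker n} ∏_{b∈π} cum b`; i.e.
`E[M₁⊗⋯⊗M_k] = ∑_π (∏_{b∈π} cum_{|b|}((X_i)_{i∈b})) · Δ_π`, and since the `Δ_π` are
linearly independent for `l ≥ k`, the coefficient of `Δ_π` is `∏_{b∈π} cum_{|b|}((X_i)_{i∈b})`;
for the one-block partition it is the classical cumulant `cum_k(X₁,…,X_k)`. -/
theorem expectation_tensor_diag_eq_cumulant_sum
    {Ω : Type*} [MeasurableSpace Ω] (μ : Measure Ω) [IsProbabilityMeasure μ]
    {k l : ℕ} (hkl : k ≤ l)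
    (X : Fin k → Ω → ℝ) (Xc : Fin l → Fin k → Ω → ℝ)
    (hmeas : ∀ n i, Measurable (Xc n i))
    (hint : ∀ s : Finset (Fin l × Fin k), Integrable (fun ω => ∏ q ∈ s, Xc q.1 q.2 ω) μ)
    (hindep : iIndepFun (fun n : Fin l => fun ω => fun i => Xc n i ω) μ)
    (hid : ∀ n : Fin l,
      IdentDistrib (fun ω => fun i => Xc n i ω) (fun ω => fun i => X i ω) μ μ)
    (cum : Finset (Fin k) → ℝ)
    (hcum : ∀ s : Finset (Fin k), s.Nonempty →
      (∫ ω, ∏ i ∈ s, X i ω ∂μ) =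
        ∑ P ∈ Finset.univ.filter (fun P : Finset (Finset (Fin k)) => IsPartitionOf P s),
          ∏ b ∈ P, cum b)
    (n : Fin k → Fin l) :
    (∫ ω, ∏ i, Xc (n i) i ω ∂μ) =
      ∑ P ∈ Finset.univ.filter (fun P : Finset (Finset (Fin k)) =>
          IsPartitionOf P Finset.univ ∧ ∀ b ∈ P, ∀ u ∈ b, ∀ v ∈ b, n u = n v),
        ∏ b ∈ P, cum b := by
  classical
  set F : Fin l → Finset (Fin k) := fun m => Finset.univ.filter (fun i => n i = m) with hF
  set g : Fin l → Ω → ℝ := fun m ω => ∏ i ∈ F m, Xc m i ω with hg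
  -- Step A : group the product by fibers of `n`
  have stepA : (∫ ω, ∏ i, Xc (n i) i ω ∂μ) = ∫ ω, ∏ m, g m ω ∂μ := by
    congr 1
    funext ω
    rw [← Finset.prod_fiberwise_of_maps_to (t := Finset.univ)
      (fun i _ => Finset.mem_univ (n i)) (fun i => Xc (n i) i ω)]
    refine Finset.prod_congr rfl fun m _ => Finset.prod_congr rfl fun i hi => ?_
    have hni : n i = m := by simpa using (Finset.mem_filter.1 hi).2
    rw [hni]
  -- measurability of the `g m`
  have hgmeas : ∀ m, Measurable (g m) := fun m =>
    Finset.measurable_prod (F m) (fun i _ => hmeas m i)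
  -- independence of the `g m`
  have hgindep : iIndepFun g μ := by
    have hm : ∀ m : Fin l, Measurable (fun v : Fin k → ℝ => ∏ i ∈ F m, v i) := fun m =>
      Finset.measurable_prod (F m) (fun i _ => measurable_pi_apply i)
    exact hindep.comp (fun m => fun v : Fin k → ℝ => ∏ i ∈ F m, v i) hm
  -- integrability of products of the `g m`
  have hgint : ∀ t : Finset (Fin l), Integrable (fun ω => ∏ m ∈ t, g m ω) μ := by
    intro t
    set S : Finset (Fin l × Fin k) := t.biUnion (fun m => (F m).image (fun i => (m, i))) with hS
    have hdisjS : (t : Set (Fin l)).PairwiseDisjoint (fun m => (F m).image (fun i => (m, i))) := by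
      intro m _ m' _ hmm'
      rw [Function.onFun, Finset.disjoint_left]
      rintro q hq hq'
      rw [Finset.mem_image] at hq hq'
      obtain ⟨i, -, rfl⟩ := hq
      obtain ⟨i', -, h2⟩ := hq'
      exact hmm' (congrArg Prod.fst h2).symm
    have key : (fun ω => ∏ q ∈ S, Xc q.1 q.2 ω) = fun ω => ∏ m ∈ t, g m ω := by
      funext ω
      rw [hS, Finset.prod_biUnion hdisjS]
      refine Finset.prod_congr rfl fun m _ => ?_
      rw [Finset.prod_image (by intro a _ b _ h; exact (Prod.mk.injEq m a m b ▸ h).2)]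
    rw [← key]
    exact hint S
  -- Step C : factor the expectation by independence
  have stepC : ∫ ω, ∏ m, g m ω ∂μ = ∏ m, ∫ ω, g m ω ∂μ :=
    aux_integral_prod_indep g hgindep hgmeas hgint Finset.univ
  -- Step D/E : compute each factor via identical distribution and the cumulant relation
  have stepD : ∀ m, ∫ ω, g m ω ∂μ =
      ∑ P ∈ Finset.univ.filter (fun P : Finset (Finset (Fin k)) => IsPartitionOf P (F m)),
        ∏ b ∈ P, cum b := by
    intro m
    have hm : Measurable (fun v : Fin k → ℝ => ∏ i ∈ F m, v i) :=
      Finset.measurable_prod (F m) (fun i _ => measurable_pi_apply i)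
    have hidm : IdentDistrib (g m) (fun ω => ∏ i ∈ F m, X i ω) μ μ := (hid m).comp hm
    rw [hidm.integral_eq]
    rcases Finset.eq_empty_or_nonempty (F m) with he | hne
    · rw [he]
      have hfe : Finset.univ.filter
          (fun P : Finset (Finset (Fin k)) => IsPartitionOf P (∅ : Finset (Fin k))) = {∅} := by
        ext P
        simp [aux_isPartitionOf_empty_iff]
      rw [hfe]
      simp
    · exact hcum (F m) hne
  rw [stepA, stepC]
  calc (∏ m, ∫ ω, g m ω ∂μ)
      = ∏ m : Fin l, ∑ P ∈ Finset.univ.filter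
          (fun P : Finset (Finset (Fin k)) =>
            IsPartitionOf P (Finset.univ.filter (fun i => n i = m))), ∏ b ∈ P, cum b :=
        Finset.prod_congr rfl fun m _ => stepD m
    _ = _ := aux_partition_glue n cum
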